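/- Let W be a Coxeter group with generators s_1,…,s_n acting on the real vector space V with basis α_1,…,α_n via s_i(v) = v − 2B(α_i, v)α_i, where B(α_i, α_j) = M_ij/2 for an E-generalized Cartan matrix M. Fix i ≠ j with m_ij finite and odd (so M_ij M_ji = 4cos²(π/m_ij)), and let k = (m_ij − 1)/2. Then (s_i s_j)^k · α_i = (−M_ji / (2cos(π/m_ij))) · α_j. -/
import Mathlib


open Real

/-- The quasi-standard reflection `s_i` acting on `V = ℝⁿ` with basis of simple roots
`α_j = Pi.single j 1`: `s_i(v) = v − 2B(α_i,v)α_i` where `B(α_i,α_j) = M_ij/2`, so that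
`2B(α_i, v) = ∑_j M_ij v_j`. -/
noncomputable def erefl {n : ℕ} (M : Matrix (Fin n) (Fin n) ℝ) (i : Fin n)
    (v : Fin n → ℝ) : Fin n → ℝ :=
  v - (∑ j, M i j * v j) • (Pi.single i 1 : Fin n → ℝ)


lemma erefl_pair {n : ℕ} (M : Matrix (Fin n) (Fin n) ℝ) (p i j : Fin n) (x y : ℝ) :
    erefl M p (x • (Pi.single i 1 : Fin n → ℝ) + y • (Pi.single j 1 : Fin n → ℝ))
      = x • (Pi.single i 1 : Fin n → ℝ) + y • (Pi.single j 1 : Fin n → ℝ)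
        - (M p i * x + M p j * y) • (Pi.single p 1 : Fin n → ℝ) := by
  unfold erefl
  congr 2
  simp [Pi.single_apply, mul_add, mul_ite, Finset.sum_add_distrib, mul_comm]

lemma sin_rec (A t : ℝ) :
    Real.sin (A + 2*t) = 2 * Real.cos t * Real.sin (A + t) - Real.sin A := by
  rw [show A + 2*t = (A + t) + t by ring, Real.sin_add, Real.sin_add, Real.cos_add]
  linear_combination (-Real.sin A) * (Real.sin_sq_add_cos_sq t)

/-- If `m_ij ≥ 3` is odd and `M_ij M_ji = 4cos²(π/m_ij)` with `k = (m_ij − 1)/2`, then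
`(s_i s_j)^k · α_i = (−M_ji/(2cos(π/m_ij))) · α_j`. -/
theorem dihedral_odd {n : ℕ} (M : Matrix (Fin n) (Fin n) ℝ) (i j : Fin n) (hij : i ≠ j)
    (hMii : M i i = 2) (hMjj : M j j = 2) (hMij : M i j ≤ 0) (hMji : M j i ≤ 0)
    (m : ℕ) (hm : 3 ≤ m) (hodd : Odd m)
    (hprod : M i j * M j i = 4 * Real.cos (π / m) ^ 2)
    (k : ℕ) (hk : k = (m - 1) / 2) :
    (erefl M i ∘ erefl M j)^[k] (Pi.single i 1) =
      (-(M j i) / (2 * Real.cos (π / m))) • (Pi.single j 1 : Fin n → ℝ) := by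
  have hm0 : (0:ℝ) < m := by positivity
  set θ : ℝ := π / m with hθ
  set c : ℝ := Real.cos θ with hc
  set s : ℝ := Real.sin θ with hs
  have hθpos : 0 < θ := by positivity
  have hθlt : θ < π / 2 := by
    rw [hθ]
    rw [div_lt_div_iff₀ hm0 two_pos]
    have : (2:ℝ) < m := by exact_mod_cast lt_of_lt_of_le (by norm_num) hm
    nlinarith [Real.pi_pos]
  have hcpos : 0 < c := Real.cos_pos_of_mem_Ioo ⟨by linarith [Real.pi_pos], hθlt⟩
  have hspos : 0 < s := Real.sin_pos_of_pos_of_lt_pi hθpos (by linarith [Real.pi_pos])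
  have hcne : c ≠ 0 := ne_of_gt hcpos
  have hsne : s ≠ 0 := ne_of_gt hspos
  have hMjine : M j i ≠ 0 := by
    intro h
    rw [h, mul_zero] at hprod
    nlinarith
  have hMijeq : M i j = 4 * c^2 / M j i := by
    rw [eq_div_iff hMjine]; exact hprod
  -- the step map on the plane spanned by α_i, α_j
  have hstep : ∀ x y : ℝ,
      (erefl M i ∘ erefl M j) (x • (Pi.single i 1 : Fin n → ℝ) + y • (Pi.single j 1 : Fin n → ℝ))
        = (-x - M i j * (-(M j i)*x - y)) • (Pi.single i 1 : Fin n → ℝ)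
          + (-(M j i)*x - y) • (Pi.single j 1 : Fin n → ℝ) := by
    intro x y
    have h1 : erefl M j (x • (Pi.single i 1 : Fin n → ℝ) + y • (Pi.single j 1 : Fin n → ℝ))
        = x • (Pi.single i 1 : Fin n → ℝ) + (-(M j i)*x - y) • (Pi.single j 1 : Fin n → ℝ) := by
      rw [erefl_pair M j i j, hMjj]; module
    have h2 : erefl M i (x • (Pi.single i 1 : Fin n → ℝ)
          + (-(M j i)*x - y) • (Pi.single j 1 : Fin n → ℝ))
        = (-x - M i j * (-(M j i)*x - y)) • (Pi.single i 1 : Fin n → ℝ)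
          + (-(M j i)*x - y) • (Pi.single j 1 : Fin n → ℝ) := by
      rw [erefl_pair M i i j, hMii]; module
    simp only [Function.comp_apply, h1, h2]
  -- key induction
  have key : ∀ r : ℕ, (erefl M i ∘ erefl M j)^[r] (Pi.single i 1)
      = (Real.sin ((2*(r:ℝ)+1)*θ)/s) • (Pi.single i 1 : Fin n → ℝ)
        + ((-(M j i)/(2*c)) * (Real.sin ((2*(r:ℝ))*θ)/s)) • (Pi.single j 1 : Fin n → ℝ) := by
    intro r
    induction r with
    | zero =>
      simp only [Nat.cast_zero, Function.iterate_zero, id_eq]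
      rw [show (2*(0:ℝ)+1)*θ = θ by ring, show (2*(0:ℝ))*θ = 0 by ring, Real.sin_zero]
      rw [← hs, div_self hsne]
      simp
    | succ r ih =>
      rw [Function.iterate_succ_apply', ih, hstep]
      have t2 : Real.sin ((2*(r:ℝ)+2)*θ) = 2*c*Real.sin ((2*(r:ℝ)+1)*θ) - Real.sin ((2*(r:ℝ))*θ) := by
        have h := sin_rec ((2*(r:ℝ))*θ) θ
        rw [show (2*(r:ℝ))*θ + 2*θ = (2*(r:ℝ)+2)*θ by ring,
            show (2*(r:ℝ))*θ + θ = (2*(r:ℝ)+1)*θ by ring] at h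
        exact h
      have t1 : Real.sin ((2*(r:ℝ)+3)*θ) = 2*c*Real.sin ((2*(r:ℝ)+2)*θ) - Real.sin ((2*(r:ℝ)+1)*θ) := by
        have h := sin_rec ((2*(r:ℝ)+1)*θ) θ
        rw [show (2*(r:ℝ)+1)*θ + 2*θ = (2*(r:ℝ)+3)*θ by ring,
            show (2*(r:ℝ)+1)*θ + θ = (2*(r:ℝ)+2)*θ by ring] at h
        exact h
      have ex : -(Real.sin ((2*(r:ℝ)+1)*θ)/s)
            - M i j * (-(M j i)*(Real.sin ((2*(r:ℝ)+1)*θ)/s)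
              - (-(M j i)/(2*c)) * (Real.sin ((2*(r:ℝ))*θ)/s))
          = Real.sin ((2*((r:ℝ)+1)+1)*θ)/s := by
        rw [show (2*((r:ℝ)+1)+1)*θ = (2*(r:ℝ)+3)*θ by ring, t1, t2, hMijeq]
        field_simp
        ring
      have ey : -(M j i)*(Real.sin ((2*(r:ℝ)+1)*θ)/s)
            - (-(M j i)/(2*c)) * (Real.sin ((2*(r:ℝ))*θ)/s)
          = (-(M j i)/(2*c)) * (Real.sin ((2*((r:ℝ)+1))*θ)/s) := by
        rw [show (2*((r:ℝ)+1))*θ = (2*(r:ℝ)+2)*θ by ring, t2]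
        field_simp
        ring
      push_cast
      rw [ex, ey]
  -- evaluate at r = k
  obtain ⟨t, ht⟩ := hodd
  have hkt : k = t := by omega
  have h2k1 : (2*(k:ℝ)+1) = (m:ℝ) := by
    have : 2*k+1 = m := by omega
    exact_mod_cast this
  have h2k : (2*(k:ℝ)) = (m:ℝ) - 1 := by linarith
  have e1 : Real.sin ((2*(k:ℝ)+1)*θ) = 0 := by
    rw [h2k1, hθ, mul_div_cancel₀ _ (ne_of_gt hm0), Real.sin_pi]
  have e2 : Real.sin ((2*(k:ℝ))*θ) = s := by
    rw [h2k, show ((m:ℝ)-1)*θ = (m:ℝ)*θ - θ by ring, hθ,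
        mul_div_cancel₀ _ (ne_of_gt hm0), Real.sin_pi_sub]
  rw [key k, e1, e2, div_self hsne, zero_div, mul_one, zero_smul, zero_add]
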